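/- arXiv:2505.03493 — 2 statements merged into one kernel-verified Lean document; each statement's English description precedes it below -/
import Mathlib

section
/- Let V_c(x) = g_c⊤ x + b_c be an affine function on a cell Y_c, and suppose for vectors γ_d with Σ_d γ_d = g_c the quantity s := Σ_d γ_d⊤ f(x_d) + ‖γ_d‖ M ‖v − x_d‖ is negative at a point v ∈ Y_c, where f is M-Lipschitz. Then ∇V_c(v)⊤ f(v) = g_c⊤ f(v) < 0. -/
/-- Negativity of a slack variable certifies strict decrease of the affine
Lyapunov piece at the corresponding vertex: if `∑ γ d = g_c` and the slack
`s = ∑ d (⟪γ d, f (x d)⟫ + ‖γ d‖ M ‖v - x d‖)` is negative, then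
`∇V_c(v)ᵀ f(v) = ⟪g_c, f v⟫ < 0`. -/
theorem stmt_1 {n N : ℕ}
    (f : EuclideanSpace ℝ (Fin n) → EuclideanSpace ℝ (Fin n)) (M : ℝ)
    (hf : ∀ a b, ‖f a - f b‖ ≤ M * ‖a - b‖)
    (γ : Fin N → EuclideanSpace ℝ (Fin n)) (gc : EuclideanSpace ℝ (Fin n)) (bc : ℝ)
    (Vc : EuclideanSpace ℝ (Fin n) → ℝ)
    (hVc : ∀ y, Vc y = (inner ℝ gc y : ℝ) + bc)
    (hg : gc = ∑ d, γ d)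
    (x : Fin N → EuclideanSpace ℝ (Fin n)) (v : EuclideanSpace ℝ (Fin n))
    (s : ℝ)
    (hs : s = ∑ d, ((inner ℝ (γ d) (f (x d)) : ℝ) + ‖γ d‖ * M * ‖v - x d‖))
    (hneg : s < 0) :
    (inner ℝ gc (f v) : ℝ) < 0 := by
  have key : (inner ℝ gc (f v) : ℝ) ≤ s := by
    rw [hg, hs, sum_inner]
    apply Finset.sum_le_sum
    intro d _
    have h1 : (inner ℝ (γ d) (f v) : ℝ) = inner ℝ (γ d) (f (x d)) + inner ℝ (γ d) (f v - f (x d)) := by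
      rw [← inner_add_right]
      congr 1
      abel
    rw [h1]
    have h2 : (inner ℝ (γ d) (f v - f (x d)) : ℝ) ≤ ‖γ d‖ * M * ‖v - x d‖ := by
      calc (inner ℝ (γ d) (f v - f (x d)) : ℝ) ≤ ‖γ d‖ * ‖f v - f (x d)‖ :=
            real_inner_le_norm _ _
        _ ≤ ‖γ d‖ * (M * ‖v - x d‖) :=
            mul_le_mul_of_nonneg_left (hf _ _) (norm_nonneg _)
        _ = ‖γ d‖ * M * ‖v - x d‖ := by ring
    linarith
  linarith
end

section
/- For the damped pendulum f(θ, ω) = (ω, −sin(θ) − 2ω) and V_Q(x) = (1/2) xᵀ Q x with Q = [[10, 3], [3, 4]], the Lie derivative satisfies ∇V_Q(x)⊤ f(x) < 0 for all x = (θ, ω) with 0 < ‖x‖_∞ ≤ 1. -/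
lemma sin_bounds_aux (x : ℝ) (h0 : 0 ≤ x) (h1 : x ≤ 1) :
    x - x ^ 3 / 4 ≤ Real.sin x ∧ Real.sin x ≤ x := by
  rcases eq_or_lt_of_le h0 with h | h
  · simp [← h]
  · exact ⟨(by have := Real.sin_gt_sub_cube h; have := pow_pos h 3; linarith), (Real.sin_lt h).le⟩

/-- For the damped pendulum `f(θ, ω) = (ω, -sin θ - 2ω)` and
`V_Q(x) = (1/2) xᵀ Q x` with `Q = [[10,3],[3,4]]`, the Lie derivative
`∇V_Q(x)ᵀ f(x) = (Qx)ᵀ f(x)` is negative on the punctured square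
`0 < ‖x‖_∞ ≤ 1`. In coordinates: `Qx = (10θ + 3ω, 3θ + 4ω)`. -/
theorem stmt_9 (θ ω : ℝ) (hne : (θ, ω) ≠ ((0:ℝ), (0:ℝ)))
    (hθ : |θ| ≤ 1) (hω : |ω| ≤ 1) :
    (10 * θ + 3 * ω) * ω + (3 * θ + 4 * ω) * (-Real.sin θ - 2 * ω) < 0 := by
  have hpos : 0 < θ ^ 2 + ω ^ 2 := by
    rcases eq_or_ne θ 0 with h | h
    · rcases eq_or_ne ω 0 with h' | h'
      · exact absurd (by simp [h, h']) hne
      · have := pow_pos (abs_pos.mpr h') 2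
        nlinarith [sq_nonneg θ, sq_abs ω]
    · have := pow_pos (abs_pos.mpr h) 2
      nlinarith [sq_nonneg ω, sq_abs θ]
  have hθ1 : θ ≤ 1 := (abs_le.mp hθ).2
  have hθ2 : -1 ≤ θ := (abs_le.mp hθ).1
  have hθsq : θ ^ 2 ≤ 1 := by nlinarith
  have hωsq : ω ^ 2 ≤ 1 := by nlinarith [abs_le.mp hω]
  -- key bounds: θ·sin θ ≥ θ² - θ⁴/4 and (sin θ - θ)² ≤ θ⁶/16
  have key : θ ^ 2 - θ ^ 4 / 4 ≤ θ * Real.sin θ ∧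
      (Real.sin θ - θ) ^ 2 ≤ θ ^ 6 / 16 := by
    rcases le_or_gt 0 θ with h | h
    · obtain ⟨a, b⟩ := sin_bounds_aux θ h hθ1
      constructor
      · nlinarith
      · nlinarith
    · obtain ⟨a, b⟩ := sin_bounds_aux (-θ) (by linarith) (by linarith)
      rw [Real.sin_neg] at a b
      constructor
      · nlinarith
      · nlinarith
  obtain ⟨hs1, hd⟩ := key
  nlinarith [sq_nonneg (ω + 2 * (Real.sin θ - θ)), sq_nonneg (ω - 2 * (Real.sin θ - θ)),
    sq_nonneg θ, sq_nonneg ω, sq_nonneg (θ ^ 2), sq_nonneg (θ ^ 3),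
    mul_le_one₀ hθsq (sq_nonneg θ) hθsq]
end
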